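/- For any N×N real matrix K, the sum over all subsets J of {1,...,N} of (-1)^{|J̄|} det(K - 1_{J̄}) equals 1. -/

import Mathlib

open Matrix BigOperators

/-- Principal minor of `K` indexed by the subset `J`. -/
def pm {N : ℕ} (K : Matrix (Fin N) (Fin N) ℝ) (J : Finset (Fin N)) : ℝ :=
  (K.submatrix (fun i : J => (i : Fin N)) (fun j : J => (j : Fin N))).det

/-- Diagonal 0/1 matrix supported on `J`. -/
def ind {N : ℕ} (J : Finset (Fin N)) : Matrix (Fin N) (Fin N) ℝ :=
  Matrix.diagonal (fun i => if i ∈ J then (1 : ℝ) else 0)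

theorem stmt_1 {N : ℕ} (K : Matrix (Fin N) (Fin N) ℝ) :
    ∑ J : Finset (Fin N), (-1 : ℝ) ^ (Jᶜ.card) * (K - ind Jᶜ).det = 1 := by
  classical
  set f := (Matrix.detRowAlternating : (Fin N → ℝ) [⋀^Fin N]→ₗ[ℝ] ℝ) with hf
  have key : ∀ J : Finset (Fin N),
      (-1 : ℝ) ^ (Jᶜ.card) * (K - ind Jᶜ).det
        = f (J.piecewise (fun i => K i) (fun i => (1 - K) i)) := by
    intro J
    set m : Fin N → Fin N → ℝ := J.piecewise (fun i => K i) (fun i => (1 - K) i) with hm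
    have hrow : (fun i => (K - ind Jᶜ) i)
        = Jᶜ.piecewise (fun i => (-1 : ℝ) • m i) m := by
      funext i
      by_cases hi : i ∈ J
      · have hi' : i ∉ Jᶜ := by simpa using hi
        funext j
        simp [Finset.piecewise, hm, hi, hi', ind, Matrix.diagonal, Matrix.sub_apply,
          Matrix.of_apply]
      · have hi' : i ∈ Jᶜ := by simpa using hi
        funext j
        simp [Finset.piecewise, hm, hi, hi', ind, Matrix.diagonal, Matrix.sub_apply,
          Matrix.one_apply, Matrix.of_apply]
    have hdet : (K - ind Jᶜ).det = f (Jᶜ.piecewise (fun i => (-1 : ℝ) • m i) m) := by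
      rw [← hrow]
      rfl
    have hps : f (Jᶜ.piecewise (fun i => (-1 : ℝ) • m i) m)
        = ((-1 : ℝ) ^ Jᶜ.card) • f m := by
      simpa using f.toMultilinearMap.map_piecewise_smul (fun _ => (-1 : ℝ)) m Jᶜ
    rw [hdet, hps]
    simp [smul_eq_mul, ← mul_assoc, ← mul_pow]
  calc ∑ J : Finset (Fin N), (-1 : ℝ) ^ (Jᶜ.card) * (K - ind Jᶜ).det
      = ∑ J : Finset (Fin N), f (J.piecewise (fun i => K i) (fun i => (1 - K) i)) := by
        exact Finset.sum_congr rfl fun J _ => key J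
    _ = f ((fun i => K i) + (fun i => (1 - K) i)) :=
        (f.toMultilinearMap.map_add_univ _ _).symm
    _ = 1 := by
        have : ((fun i => K i) + (fun i => (1 - K) i)) = fun i => (1 : Matrix (Fin N) (Fin N) ℝ) i := by
          funext i j; simp [Matrix.sub_apply]
        rw [this]
        have : f (fun i => (1 : Matrix (Fin N) (Fin N) ℝ) i) = Matrix.det (1 : Matrix (Fin N) (Fin N) ℝ) := rfl
        rw [this, Matrix.det_one]
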